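/- For the map x: ℂ → S⁶ defined in the previous statement, the conformal factor satisfies |∂_z x|² = (2 + 8r² + r⁴/2 + 4r⁶/9 + 8r⁸/9 + r¹⁰/18 + 2r¹²/81)/(1 + r² + 5r⁴/4 + 4r⁶/9 + r⁸/36)², and this quantity is strictly positive for all z ∈ ℂ; hence x is an immersion on ℂ. -/

import Mathlib

set_option maxHeartbeats 1000000


open Complex

noncomputable def Dfun (z : ℂ) : ℂ :=
  1 + (‖z‖ : ℂ) ^ 2 + 5 * (‖z‖ : ℂ) ^ 4 / 4
    + 4 * (‖z‖ : ℂ) ^ 6 / 9 + (‖z‖ : ℂ) ^ 8 / 36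

noncomputable def xmap (z : ℂ) : Fin 7 → ℂ :=
  let r : ℂ := (‖z‖ : ℂ)
  (Dfun z)⁻¹ • ![
    1 - r ^ 2 - 3 * r ^ 4 / 4 + 4 * r ^ 6 / 9 - r ^ 8 / 36,
    -I * (z - (starRingEnd ℂ) z) * (1 + r ^ 6 / 9),
    (z + (starRingEnd ℂ) z) * (1 + r ^ 6 / 9),
    -I * (z ^ 2 - ((starRingEnd ℂ) z) ^ 2) * (1 - r ^ 4 / 12),
    (z ^ 2 + ((starRingEnd ℂ) z) ^ 2) * (1 - r ^ 4 / 12),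
    -I * (r ^ 2 / 2) * (z - (starRingEnd ℂ) z) * (1 + 4 * r ^ 2 / 3),
    (r ^ 2 / 2) * (z + (starRingEnd ℂ) z) * (1 + 4 * r ^ 2 / 3)]

/-- The Wirtinger derivative `∂_z F = ½(∂_x F - i ∂_y F)` of a map `F : ℂ → ℂ`. -/
noncomputable def wirtZ (F : ℂ → ℂ) (z : ℂ) : ℂ :=
  (1 / 2 : ℂ) * (fderiv ℝ F z 1 - Complex.I * fderiv ℝ F z Complex.I)

open ComplexConjugate

/-! ### Auxiliary machinery : Wirtinger calculus -/

noncomputable def cid : ℂ →L[ℝ] ℂ := ContinuousLinearMap.id ℝ ℂ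
noncomputable def cconj : ℂ →L[ℝ] ℂ := Complex.conjCLE.toContinuousLinearMap

/-- `F` is real-differentiable at `z` with Wirtinger derivative `a`. -/
def Wir (F : ℂ → ℂ) (z a : ℂ) : Prop :=
  ∃ b : ℂ, HasFDerivAt F (a • cid + b • cconj) z

lemma comb_apply (a b v : ℂ) : (a • cid + b • cconj) v = a * v + b * conj v := by
  simp [cid, cconj, smul_eq_mul]

lemma Wir.wirtZ_eq {F : ℂ → ℂ} {z a : ℂ} (h : Wir F z a) : wirtZ F z = a := by
  obtain ⟨b, hb⟩ := h
  rw [wirtZ, hb.fderiv, comb_apply, comb_apply]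
  rw [map_one, Complex.conj_I]
  linear_combination (b - a) / 2 * Complex.I_sq

lemma Wir_id (z : ℂ) : Wir (fun w => w) z 1 := by
  refine ⟨0, ?_⟩
  have : HasFDerivAt (fun w : ℂ => w) (ContinuousLinearMap.id ℝ ℂ) z := hasFDerivAt_id z
  convert this using 1
  ext v; rw [comb_apply]; simp

lemma Wir_conj (z : ℂ) : Wir (fun w => conj w) z 0 := by
  refine ⟨1, ?_⟩
  have : HasFDerivAt (fun w : ℂ => conj w) cconj z := by
    exact cconj.hasFDerivAt (x := z)
  convert this using 1
  ext v; rw [comb_apply]; simp [cconj]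

lemma Wir_const (z c : ℂ) : Wir (fun _ => c) z 0 := by
  refine ⟨0, ?_⟩
  have h : (0:ℂ) • cid + (0:ℂ) • cconj = 0 := by ext v; rw [comb_apply]; simp
  rw [h]
  exact hasFDerivAt_const c z

lemma Wir.add {F G : ℂ → ℂ} {z a a' : ℂ} (hF : Wir F z a) (hG : Wir G z a') :
    Wir (fun w => F w + G w) z (a + a') := by
  obtain ⟨b, hb⟩ := hF; obtain ⟨b', hb'⟩ := hG
  refine ⟨b + b', ?_⟩
  refine HasFDerivAt.congr_fderiv (hb.add hb') ?_
  ext v; simp [comb_apply]; ring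

lemma Wir.neg {F : ℂ → ℂ} {z a : ℂ} (hF : Wir F z a) : Wir (fun w => -F w) z (-a) := by
  obtain ⟨b, hb⟩ := hF
  refine ⟨-b, ?_⟩
  refine HasFDerivAt.congr_fderiv (hb.neg) ?_
  ext v; simp [comb_apply]; ring

lemma Wir.sub {F G : ℂ → ℂ} {z a a' : ℂ} (hF : Wir F z a) (hG : Wir G z a') :
    Wir (fun w => F w - G w) z (a - a') := by
  have := hF.add hG.neg
  simpa [sub_eq_add_neg] using this

lemma Wir.mul {F G : ℂ → ℂ} {z a a' : ℂ} (hF : Wir F z a) (hG : Wir G z a') :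
    Wir (fun w => F w * G w) z (F z * a' + G z * a) := by
  obtain ⟨b, hb⟩ := hF; obtain ⟨b', hb'⟩ := hG
  refine ⟨F z * b' + G z * b, ?_⟩
  refine HasFDerivAt.congr_fderiv (hb.mul hb') ?_
  ext v; simp [comb_apply, smul_eq_mul]; ring

lemma Wir.inv {F : ℂ → ℂ} {z a : ℂ} (hF : Wir F z a) (h0 : F z ≠ 0) :
    Wir (fun w => (F w)⁻¹) z (-a / F z ^ 2) := by
  obtain ⟨b, hb⟩ := hF
  refine ⟨-b / F z ^ 2, ?_⟩
  have := (hasFDerivAt_inv' (𝕜 := ℝ) h0).comp z hb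
  refine HasFDerivAt.congr_fderiv this ?_
  ext v
  simp [comb_apply, ContinuousLinearMap.comp_apply, ContinuousLinearMap.mulLeftRight_apply]
  field_simp

lemma Wir.congr {F G : ℂ → ℂ} {z a a' : ℂ} (hF : Wir F z a)
    (hFG : ∀ w, F w = G w) (ha : a = a') : Wir G z a' := by
  subst ha
  obtain ⟨b, hb⟩ := hF
  exact ⟨b, hb.congr_of_eventuallyEq (Filter.Eventually.of_forall fun w => (hFG w).symm)⟩

lemma Wir.const_mul {F : ℂ → ℂ} {z a : ℂ} (hF : Wir F z a) (c : ℂ) :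
    Wir (fun w => c * F w) z (c * a) :=
  ((Wir_const z c).mul hF).congr (fun _ => rfl) (by ring)

/-! ### The numerators and denominator -/

noncomputable def dd (z c : ℂ) : ℂ :=
  1 + z*c + 5*(z*c)^2/4 + 4*(z*c)^3/9 + (z*c)^4/36

noncomputable def ee (z c : ℂ) : ℂ :=
  c + 5*c*(z*c)/2 + 4*c*(z*c)^2/3 + c*(z*c)^3/9

noncomputable def N0 (z c : ℂ) : ℂ :=
  (-c - 3*(z*c)*c/2 + 4*(z*c)^2*c/3 - (z*c)^3*c/9) * dd z c
    - (1 - z*c - 3*(z*c)^2/4 + 4*(z*c)^3/9 - (z*c)^4/36) * ee z c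

noncomputable def N1 (z c : ℂ) : ℂ :=
  ((1 + (z*c)^3/9) + (z - c)*(z*c)^2*c/3) * dd z c - (z - c)*(1 + (z*c)^3/9) * ee z c

noncomputable def N2 (z c : ℂ) : ℂ :=
  ((1 + (z*c)^3/9) + (z + c)*(z*c)^2*c/3) * dd z c - (z + c)*(1 + (z*c)^3/9) * ee z c

noncomputable def N3 (z c : ℂ) : ℂ :=
  (2*z*(1 - (z*c)^2/12) - (z^2 - c^2)*(z*c)*c/6) * dd z c
    - (z^2 - c^2)*(1 - (z*c)^2/12) * ee z c

noncomputable def N4 (z c : ℂ) : ℂ :=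
  (2*z*(1 - (z*c)^2/12) - (z^2 + c^2)*(z*c)*c/6) * dd z c
    - (z^2 + c^2)*(1 - (z*c)^2/12) * ee z c

noncomputable def N5 (z c : ℂ) : ℂ :=
  ((c/2)*(z - c)*(1 + 4*(z*c)/3) + ((z*c)/2)*(1 + 4*(z*c)/3) + ((z*c)/2)*(z - c)*(4*c/3)) * dd z c
    - ((z*c)/2)*(z - c)*(1 + 4*(z*c)/3) * ee z c

noncomputable def N6 (z c : ℂ) : ℂ :=
  ((c/2)*(z + c)*(1 + 4*(z*c)/3) + ((z*c)/2)*(1 + 4*(z*c)/3) + ((z*c)/2)*(z + c)*(4*c/3)) * dd z c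
    - ((z*c)/2)*(z + c)*(1 + 4*(z*c)/3) * ee z c

set_option maxHeartbeats 2000000 in
lemma polykey (z c : ℂ) :
    N0 z c * N0 c z + N1 z c * N1 c z + N2 z c * N2 c z + N3 z c * N3 c z
      + N4 z c * N4 c z + N5 z c * N5 c z + N6 z c * N6 c z
    = (2 + 8 * (z*c) + (z*c)^2/2 + 4*(z*c)^3/9 + 8*(z*c)^4/9 + (z*c)^5/18 + 2*(z*c)^6/81)
        * (dd z c)^2 := by
  simp only [N0, N1, N2, N3, N4, N5, N6, dd, ee]
  ring

/-! ### abs-power rewrites -/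

lemma ab2 (w : ℂ) : ((‖w‖ : ℝ) : ℂ)^2 = w * conj w := by
  rw [Complex.mul_conj, ← Complex.sq_norm]; push_cast; ring

lemma ab4 (w : ℂ) : ((‖w‖ : ℝ) : ℂ)^4 = (w * conj w)^2 := by
  rw [show ((‖w‖ : ℝ) : ℂ)^4 = (((‖w‖ : ℝ) : ℂ)^2)^2 by ring, ab2]

lemma ab6 (w : ℂ) : ((‖w‖ : ℝ) : ℂ)^6 = (w * conj w)^3 := by
  rw [show ((‖w‖ : ℝ) : ℂ)^6 = (((‖w‖ : ℝ) : ℂ)^2)^3 by ring, ab2]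

lemma ab8 (w : ℂ) : ((‖w‖ : ℝ) : ℂ)^8 = (w * conj w)^4 := by
  rw [show ((‖w‖ : ℝ) : ℂ)^8 = (((‖w‖ : ℝ) : ℂ)^2)^4 by ring, ab2]

lemma ab10 (w : ℂ) : ((‖w‖ : ℝ) : ℂ)^10 = (w * conj w)^5 := by
  rw [show ((‖w‖ : ℝ) : ℂ)^10 = (((‖w‖ : ℝ) : ℂ)^2)^5 by ring, ab2]

lemma ab12 (w : ℂ) : ((‖w‖ : ℝ) : ℂ)^12 = (w * conj w)^6 := by
  rw [show ((‖w‖ : ℝ) : ℂ)^12 = (((‖w‖ : ℝ) : ℂ)^2)^6 by ring, ab2]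

/-! ### nonvanishing of the denominator -/

lemma hddR (z : ℂ) :
    (1 + z*conj z + 5*(z*conj z)^2/4 + 4*(z*conj z)^3/9 + (z*conj z)^4/36 : ℂ) ≠ 0 := by
  have h1 : (1 + z*conj z + 5*(z*conj z)^2/4 + 4*(z*conj z)^3/9 + (z*conj z)^4/36 : ℂ)
      = ((1 + Complex.normSq z + 5*(Complex.normSq z)^2/4 + 4*(Complex.normSq z)^3/9
          + (Complex.normSq z)^4/36 : ℝ) : ℂ) := by
    simp only [Complex.mul_conj]; push_cast; ring
  rw [h1]
  refine Complex.ofReal_ne_zero.mpr ?_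
  have h2 := Complex.normSq_nonneg z
  nlinarith [pow_nonneg h2 2, pow_nonneg h2 3, pow_nonneg h2 4]

lemma hdd (z : ℂ) : dd z (conj z) ≠ 0 := by
  simp only [dd]; exact hddR z

/-! ### conjugation lemmas -/

lemma conjdd (z : ℂ) : conj (dd z (conj z)) = dd (conj z) z := by
  simp only [dd, map_add, map_sub, map_mul, map_div₀, map_pow, map_one, map_ofNat,
    Complex.conj_conj]

lemma conjN0 (z : ℂ) : conj (N0 z (conj z)) = N0 (conj z) z := by
  simp only [N0, dd, ee, map_add, map_sub, map_mul, map_div₀, map_pow, map_one, map_ofNat,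
    map_neg, Complex.conj_conj]

lemma conjN1 (z : ℂ) : conj (N1 z (conj z)) = N1 (conj z) z := by
  simp only [N1, dd, ee, map_add, map_sub, map_mul, map_div₀, map_pow, map_one, map_ofNat,
    map_neg, Complex.conj_conj]

lemma conjN2 (z : ℂ) : conj (N2 z (conj z)) = N2 (conj z) z := by
  simp only [N2, dd, ee, map_add, map_sub, map_mul, map_div₀, map_pow, map_one, map_ofNat,
    map_neg, Complex.conj_conj]

lemma conjN3 (z : ℂ) : conj (N3 z (conj z)) = N3 (conj z) z := by
  simp only [N3, dd, ee, map_add, map_sub, map_mul, map_div₀, map_pow, map_one, map_ofNat,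
    map_neg, Complex.conj_conj]

lemma conjN4 (z : ℂ) : conj (N4 z (conj z)) = N4 (conj z) z := by
  simp only [N4, dd, ee, map_add, map_sub, map_mul, map_div₀, map_pow, map_one, map_ofNat,
    map_neg, Complex.conj_conj]

lemma conjN5 (z : ℂ) : conj (N5 z (conj z)) = N5 (conj z) z := by
  simp only [N5, dd, ee, map_add, map_sub, map_mul, map_div₀, map_pow, map_one, map_ofNat,
    map_neg, Complex.conj_conj]

lemma conjN6 (z : ℂ) : conj (N6 z (conj z)) = N6 (conj z) z := by
  simp only [N6, dd, ee, map_add, map_sub, map_mul, map_div₀, map_pow, map_one, map_ofNat,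
    map_neg, Complex.conj_conj]

/-! ### Wirtinger derivative building blocks -/

lemma wr2 (z : ℂ) : Wir (fun w => w * conj w) z (conj z) :=
  ((Wir_id z).mul (Wir_conj z)).congr (fun _ => rfl) (by ring)

lemma wp2 (z : ℂ) : Wir (fun w => (w*conj w)^2) z (2*(z*conj z)*conj z) :=
  ((wr2 z).mul (wr2 z)).congr (fun w => by ring) (by ring)

lemma wp3 (z : ℂ) : Wir (fun w => (w*conj w)^3) z (3*(z*conj z)^2*conj z) :=
  ((wp2 z).mul (wr2 z)).congr (fun w => by ring) (by ring)

lemma wp4 (z : ℂ) : Wir (fun w => (w*conj w)^4) z (4*(z*conj z)^3*conj z) :=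
  ((wp3 z).mul (wr2 z)).congr (fun w => by ring) (by ring)

lemma wD (z : ℂ) :
    Wir (fun w => 1 + w*conj w + 5*(w*conj w)^2/4 + 4*(w*conj w)^3/9 + (w*conj w)^4/36) z
      (ee z (conj z)) := by
  have h := ((((Wir_const z 1).add (wr2 z)).add
      ((wp2 z).const_mul (5/4))).add
      ((wp3 z).const_mul (4/9))).add
      ((wp4 z).const_mul (1/36))
  exact h.congr (fun w => by ring) (by simp only [ee]; ring)

lemma wDinv (z : ℂ) :
    Wir (fun w => (1 + w*conj w + 5*(w*conj w)^2/4 + 4*(w*conj w)^3/9 + (w*conj w)^4/36)⁻¹) z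
      (-(ee z (conj z))
        / (1 + z*conj z + 5*(z*conj z)^2/4 + 4*(z*conj z)^3/9 + (z*conj z)^4/36)^2) :=
  (wD z).inv (hddR z)

lemma combine {A B e N X : ℂ} (hX : X ≠ 0) (h : A * X - B * e = N) :
    X⁻¹ * A + B * (-e / X ^ 2) = N / X ^ 2 := by
  have hx2 : X ^ 2 ≠ 0 := pow_ne_zero 2 hX
  rw [inv_mul_eq_div, ← mul_div_assoc, div_add_div _ _ hX hx2, div_eq_div_iff (mul_ne_zero hX hx2) hx2]
  linear_combination X ^ 3 * h

/-! ### the seven components -/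

lemma wirt0 (z : ℂ) : wirtZ (fun w => xmap w 0) z = N0 z (conj z) / (dd z (conj z))^2 := by
  have p : Wir (fun w => 1 - w*conj w - 3*(w*conj w)^2/4 + 4*(w*conj w)^3/9 - (w*conj w)^4/36)
      z (-conj z - 3*(z*conj z)*conj z/2 + 4*(z*conj z)^2*conj z/3 - (z*conj z)^3*conj z/9) :=
    (((((Wir_const z 1).sub (wr2 z)).sub
      ((wp2 z).const_mul (3/4))).add
      ((wp3 z).const_mul (4/9))).sub
      ((wp4 z).const_mul (1/36))).congr (fun w => by ring) (by ring)
  have h := (wDinv z).mul p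
  refine (h.congr (fun w => ?_) ?_).wirtZ_eq
  · rw [show xmap w 0 = (Dfun w)⁻¹ * (1 - ((‖w‖ : ℝ):ℂ) ^ 2
      - 3*((‖w‖ : ℝ):ℂ)^4/4 + 4*((‖w‖ : ℝ):ℂ)^6/9
      - ((‖w‖ : ℝ):ℂ)^8/36) from rfl]
    simp only [Dfun, ab2, ab4, ab6, ab8]
    try ring
  · beta_reduce
    simp only [N0, dd, ee]
    exact combine (hddR z) (by ring)

lemma wirt1 (z : ℂ) :
    wirtZ (fun w => xmap w 1) z = -I * (N1 z (conj z) / (dd z (conj z))^2) := by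
  have p : Wir (fun w => (w - conj w) * (1 + (w*conj w)^3/9)) z
      ((1 + (z*conj z)^3/9) + (z - conj z)*(z*conj z)^2*conj z/3) :=
    (((Wir_id z).sub (Wir_conj z)).mul
      ((Wir_const z 1).add ((wp3 z).const_mul (1/9)))).congr (fun w => by ring) (by ring)
  have h := ((wDinv z).mul p).const_mul (-I)
  refine (h.congr (fun w => ?_) ?_).wirtZ_eq
  · rw [show xmap w 1 = (Dfun w)⁻¹ * (-I * (w - conj w) * (1 + ((‖w‖ : ℝ):ℂ)^6/9))
      from rfl]
    simp only [Dfun, ab2, ab4, ab6, ab8]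
    try ring
  · beta_reduce
    simp only [N1, dd, ee]
    exact congrArg (fun t => -I * t) (combine (hddR z) (by ring))

lemma wirt2 (z : ℂ) :
    wirtZ (fun w => xmap w 2) z = N2 z (conj z) / (dd z (conj z))^2 := by
  have p : Wir (fun w => (w + conj w) * (1 + (w*conj w)^3/9)) z
      ((1 + (z*conj z)^3/9) + (z + conj z)*(z*conj z)^2*conj z/3) :=
    (((Wir_id z).add (Wir_conj z)).mul
      ((Wir_const z 1).add ((wp3 z).const_mul (1/9)))).congr (fun w => by ring) (by ring)
  have h := (wDinv z).mul p
  refine (h.congr (fun w => ?_) ?_).wirtZ_eq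
  · rw [show xmap w 2 = (Dfun w)⁻¹ * ((w + conj w) * (1 + ((‖w‖ : ℝ):ℂ)^6/9))
      from rfl]
    simp only [Dfun, ab2, ab4, ab6, ab8]
    try ring
  · beta_reduce
    simp only [N2, dd, ee]
    exact combine (hddR z) (by ring)

lemma wirt3 (z : ℂ) :
    wirtZ (fun w => xmap w 3) z = -I * (N3 z (conj z) / (dd z (conj z))^2) := by
  have p : Wir (fun w => (w^2 - (conj w)^2) * (1 - (w*conj w)^2/12)) z
      (2*z*(1 - (z*conj z)^2/12) - (z^2 - (conj z)^2)*(z*conj z)*conj z/6) :=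
    ((((Wir_id z).mul (Wir_id z)).sub ((Wir_conj z).mul (Wir_conj z))).mul
      ((Wir_const z 1).sub ((wp2 z).const_mul (1/12)))).congr (fun w => by ring) (by ring)
  have h := ((wDinv z).mul p).const_mul (-I)
  refine (h.congr (fun w => ?_) ?_).wirtZ_eq
  · rw [show xmap w 3 = (Dfun w)⁻¹ * (-I * (w^2 - (conj w)^2)
      * (1 - ((‖w‖ : ℝ):ℂ)^4/12)) from rfl]
    simp only [Dfun, ab2, ab4, ab6, ab8]
    try ring
  · beta_reduce
    simp only [N3, dd, ee]
    exact congrArg (fun t => -I * t) (combine (hddR z) (by ring))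

lemma wirt4 (z : ℂ) :
    wirtZ (fun w => xmap w 4) z = N4 z (conj z) / (dd z (conj z))^2 := by
  have p : Wir (fun w => (w^2 + (conj w)^2) * (1 - (w*conj w)^2/12)) z
      (2*z*(1 - (z*conj z)^2/12) - (z^2 + (conj z)^2)*(z*conj z)*conj z/6) :=
    ((((Wir_id z).mul (Wir_id z)).add ((Wir_conj z).mul (Wir_conj z))).mul
      ((Wir_const z 1).sub ((wp2 z).const_mul (1/12)))).congr (fun w => by ring) (by ring)
  have h := (wDinv z).mul p
  refine (h.congr (fun w => ?_) ?_).wirtZ_eq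
  · rw [show xmap w 4 = (Dfun w)⁻¹ * ((w^2 + (conj w)^2)
      * (1 - ((‖w‖ : ℝ):ℂ)^4/12)) from rfl]
    simp only [Dfun, ab2, ab4, ab6, ab8]
    try ring
  · beta_reduce
    simp only [N4, dd, ee]
    exact combine (hddR z) (by ring)

lemma wirt5 (z : ℂ) :
    wirtZ (fun w => xmap w 5) z = -I * (N5 z (conj z) / (dd z (conj z))^2) := by
  have p : Wir (fun w => (w*conj w/2) * (w - conj w) * (1 + 4*(w*conj w)/3)) z
      ((conj z/2)*(z - conj z)*(1 + 4*(z*conj z)/3) + ((z*conj z)/2)*(1 + 4*(z*conj z)/3)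
        + ((z*conj z)/2)*(z - conj z)*(4*conj z/3)) :=
    ((((wr2 z).const_mul (1/2)).mul ((Wir_id z).sub (Wir_conj z))).mul
      ((Wir_const z 1).add ((wr2 z).const_mul (4/3)))).congr (fun w => by ring) (by ring)
  have h := ((wDinv z).mul p).const_mul (-I)
  refine (h.congr (fun w => ?_) ?_).wirtZ_eq
  · rw [show xmap w 5 = (Dfun w)⁻¹ * (-I * (((‖w‖ : ℝ):ℂ)^2/2) * (w - conj w)
      * (1 + 4*((‖w‖ : ℝ):ℂ)^2/3)) from rfl]
    simp only [Dfun, ab2, ab4, ab6, ab8]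
    try ring
  · beta_reduce
    simp only [N5, dd, ee]
    exact congrArg (fun t => -I * t) (combine (hddR z) (by ring))

lemma wirt6 (z : ℂ) :
    wirtZ (fun w => xmap w 6) z = N6 z (conj z) / (dd z (conj z))^2 := by
  have p : Wir (fun w => (w*conj w/2) * (w + conj w) * (1 + 4*(w*conj w)/3)) z
      ((conj z/2)*(z + conj z)*(1 + 4*(z*conj z)/3) + ((z*conj z)/2)*(1 + 4*(z*conj z)/3)
        + ((z*conj z)/2)*(z + conj z)*(4*conj z/3)) :=
    ((((wr2 z).const_mul (1/2)).mul ((Wir_id z).add (Wir_conj z))).mul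
      ((Wir_const z 1).add ((wr2 z).const_mul (4/3)))).congr (fun w => by ring) (by ring)
  have h := (wDinv z).mul p
  refine (h.congr (fun w => ?_) ?_).wirtZ_eq
  · rw [show xmap w 6 = (Dfun w)⁻¹ * ((((‖w‖ : ℝ):ℂ)^2/2) * (w + conj w)
      * (1 + 4*((‖w‖ : ℝ):ℂ)^2/3)) from rfl]
    simp only [Dfun, ab2, ab4, ab6, ab8]
    try ring
  · beta_reduce
    simp only [N6, dd, ee]
    exact combine (hddR z) (by ring)

lemma negI_normSq (x : ℂ) : Complex.normSq (-I * x) = Complex.normSq x := by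
  simp [Complex.normSq_mul]

lemma divdiv (a b D : ℂ) : a / D^2 * (b / D^2) = a * b / D^4 := by
  rw [div_mul_div_comm, show (D^2 * D^2 : ℂ) = D^4 by ring]

/-- The conformal factor `|∂_z x|²` of `x` has the stated explicit form and is strictly
positive everywhere; hence `x` is an immersion on ℂ. -/
theorem xmap_conformal_factor (z : ℂ) :
    (∑ j, Complex.normSq (wirtZ (fun w => xmap w j) z))
      = (2 + 8 * ‖z‖ ^ 2 + ‖z‖ ^ 4 / 2 + 4 * ‖z‖ ^ 6 / 9
          + 8 * ‖z‖ ^ 8 / 9 + ‖z‖ ^ 10 / 18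
          + 2 * ‖z‖ ^ 12 / 81)
        / (1 + ‖z‖ ^ 2 + 5 * ‖z‖ ^ 4 / 4 + 4 * ‖z‖ ^ 6 / 9
            + ‖z‖ ^ 8 / 36) ^ 2 ∧
    0 < ∑ j, Complex.normSq (wirtZ (fun w => xmap w j) z) := by
  have heq : (∑ j, Complex.normSq (wirtZ (fun w => xmap w j) z))
      = (2 + 8 * ‖z‖ ^ 2 + ‖z‖ ^ 4 / 2 + 4 * ‖z‖ ^ 6 / 9
          + 8 * ‖z‖ ^ 8 / 9 + ‖z‖ ^ 10 / 18
          + 2 * ‖z‖ ^ 12 / 81)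
        / (1 + ‖z‖ ^ 2 + 5 * ‖z‖ ^ 4 / 4 + 4 * ‖z‖ ^ 6 / 9
            + ‖z‖ ^ 8 / 36) ^ 2 := by
    rw [Fin.sum_univ_seven]
    rw [wirt0 z, wirt1 z, wirt2 z, wirt3 z, wirt4 z, wirt5 z, wirt6 z]
    simp only [negI_normSq]
    apply Complex.ofReal_injective
    push_cast [← Complex.mul_conj]
    simp only [map_div₀, map_pow, conjN0 z, conjN1 z, conjN2 z, conjN3 z, conjN4 z,
      conjN5 z, conjN6 z, conjdd z]
    rw [show dd (conj z) z = dd z (conj z) by simp only [dd]; ring]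
    simp only [divdiv, ← add_div]
    rw [polykey z (conj z)]
    simp only [ab2, ab4, ab6, ab8, ab10, ab12]
    have hd := hdd z
    rw [div_eq_div_iff (pow_ne_zero 4 hd) (by simpa [dd] using pow_ne_zero 2 hd)]
    simp only [dd]
    ring
  refine ⟨heq, heq ▸ div_pos (by positivity) (pow_pos (by positivity) 2)⟩
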